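/- For all real numbers a < b, each of the intervals (a,b), [a,b), and [a,b] (as subspaces of ℝ) admits a surjective interior map onto 𝐋₂; moreover, the map on [a,b] can be chosen so that both endpoints a and b are sent to the root of L₂ (the empty sequence). -/

import Mathlib

open Set

/-- Finite and infinite `σ`-valued sequences, encoded as functions `ℕ → Option σ` whose
domain of definition is an initial segment of `ℕ`. -/
structure Lgen (σ : Type*) where
  toFun : ℕ → Option σ
  init : ∀ n, toFun (n + 1) ≠ none → toFun n ≠ none

/-- The initial-segment (prefix) partial order on `Lgen σ`. -/
instance Lgen.instPartialOrder {σ : Type*} : PartialOrder (Lgen σ) where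
  le f g := ∀ (n : ℕ) (s : σ), f.toFun n = some s → g.toFun n = some s
  le_refl f n s h := h
  le_trans f g h hfg hgh n s hs := hgh n s (hfg n s hs)
  le_antisymm f g hfg hgf := by
    obtain ⟨ff, hf⟩ := f
    obtain ⟨gf, hg⟩ := g
    have hfun : ff = gf := by
      funext n
      cases hfn : ff n with
      | some s =>
        have h2 : gf n = some s := hfg n s hfn
        exact h2.symm
      | none =>
        cases hgn : gf n with
        | some s =>
          have h2 : ff n = some s := hgf n s hgn
          rw [hfn] at h2
          exact absurd h2 (by simp)
        | none => rfl
    subst hfun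
    rfl

/-- The finite sequence given by a list, as an element of `Lgen σ`. -/
def Lgen.ofList {σ : Type*} (l : List σ) : Lgen σ where
  toFun n := l[n]?
  init n h := by
    simp only [ne_eq, List.getElem?_eq_none_iff, not_le] at h ⊢
    omega

/-- The infinite binary tree with limits `L₂`: finite and infinite binary sequences with the
initial-segment order. -/
abbrev L2 : Type := Lgen Bool

/-- The Scott topology of a preorder: opens are the upper sets `U` such that every nonempty
directed set whose least upper bound lies in `U` meets `U`. -/
def scottTopology (α : Type*) [Preorder α] : TopologicalSpace α where
  IsOpen U := IsUpperSet U ∧ ∀ d : Set α, d.Nonempty → DirectedOn (· ≤ ·) d →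
      ∀ x, IsLUB d x → x ∈ U → (d ∩ U).Nonempty
  isOpen_univ := ⟨isUpperSet_univ, fun d hd _ _ _ _ => hd.imp fun y hy => ⟨hy, mem_univ y⟩⟩
  isOpen_inter := by
    rintro U V ⟨hU1, hU2⟩ ⟨hV1, hV2⟩
    refine ⟨hU1.inter hV1, fun d hdne hdir x hlub hx => ?_⟩
    obtain ⟨a, ha, haU⟩ := hU2 d hdne hdir x hlub hx.1
    obtain ⟨b, hb, hbV⟩ := hV2 d hdne hdir x hlub hx.2
    obtain ⟨c, hc, hac, hbc⟩ := hdir a ha b hb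
    exact ⟨c, hc, hU1 hac haU, hV1 hbc hbV⟩
  isOpen_sUnion := by
    intro S hS
    refine ⟨fun a b hab ha => ?_, fun d hdne hdir x hlub hx => ?_⟩
    · obtain ⟨U, hU, haU⟩ := ha
      exact ⟨U, hU, (hS U hU).1 hab haU⟩
    · obtain ⟨U, hU, hxU⟩ := hx
      obtain ⟨a, ha, haU⟩ := (hS U hU).2 d hdne hdir x hlub hxU
      exact ⟨a, ha, U, hU, haU⟩

/-- `𝐋₂`: the infinite binary tree with limits carries the Scott topology. -/
instance : TopologicalSpace L2 := scottTopology L2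



namespace S12

def bit (w : List Bool) : Bool := decide (w.length % 2 = 1)

def enc (b : Bool) : List Bool := if b then [false] else []

@[simp] lemma bit_enc (b : Bool) : bit (enc b) = b := by cases b <;> simp [bit, enc]

noncomputable def Jiv : List Bool → ℝ → ℝ → ℝ × ℝ
  | [], u, v => (u, v)
  | false :: w, u, v => Jiv w u (u + (v - u)/3)
  | true :: w, u, v => Jiv w (v - (v - u)/3) v

@[simp] lemma Jiv_nil (u v : ℝ) : Jiv [] u v = (u, v) := rfl
lemma Jiv_cons_false (u v : ℝ) (w : List Bool) :
    Jiv (false :: w) u v = Jiv w u (u + (v - u)/3) := rfl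
lemma Jiv_cons_true (u v : ℝ) (w : List Bool) :
    Jiv (true :: w) u v = Jiv w (v - (v - u)/3) v := rfl

noncomputable def gap (u v : ℝ) (w : List Bool) : ℝ × ℝ :=
  ((Jiv w u v).1 + ((Jiv w u v).2 - (Jiv w u v).1)/3,
   (Jiv w u v).2 - ((Jiv w u v).2 - (Jiv w u v).1)/3)

noncomputable def ivalF : List (List Bool) → ℝ → ℝ → ℝ × ℝ
  | [], u, v => (u, v)
  | w :: t, u, v => ivalF t (gap u v w).1 (gap u v w).2

@[simp] lemma ivalF_nil (u v : ℝ) : ivalF [] u v = (u, v) := rfl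
lemma ivalF_cons (u v : ℝ) (w : List Bool) (t : List (List Bool)) :
    ivalF (w :: t) u v = ivalF t (gap u v w).1 (gap u v w).2 := rfl

lemma Jiv_prop (w : List Bool) : ∀ u v : ℝ, u < v →
    u ≤ (Jiv w u v).1 ∧ (Jiv w u v).1 < (Jiv w u v).2 ∧ (Jiv w u v).2 ≤ v ∧
    (Jiv w u v).2 - (Jiv w u v).1 = (v - u)/3^w.length := by
  induction w with
  | nil => intro u v h; refine ⟨le_refl _, h, le_refl _, by simp⟩
  | cons b w ih =>
    intro u v h
    cases b
    · obtain ⟨h1, h2, h3, h4⟩ := ih u (u + (v - u)/3) (by linarith)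
      rw [Jiv_cons_false]
      refine ⟨h1, h2, by linarith, ?_⟩
      rw [h4, List.length_cons, pow_succ]
      have e : u + (v - u)/3 - u = (v - u)/3 := by ring
      rw [e, div_div, mul_comm]
    · obtain ⟨h1, h2, h3, h4⟩ := ih (v - (v - u)/3) v (by linarith)
      rw [Jiv_cons_true]
      refine ⟨by linarith, h2, h3, ?_⟩
      rw [h4, List.length_cons, pow_succ]
      have e : v - (v - (v - u)/3) = (v - u)/3 := by ring
      rw [e, div_div, mul_comm]

lemma gap_sub {u v : ℝ} (h : u < v) (w : List Bool) :
    (Jiv w u v).1 < (gap u v w).1 ∧ (gap u v w).1 < (gap u v w).2 ∧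
    (gap u v w).2 < (Jiv w u v).2 ∧
    (gap u v w).2 - (gap u v w).1 = (v - u)/3^(w.length + 1) := by
  obtain ⟨h1, h2, h3, h4⟩ := Jiv_prop w u v h
  have e : (gap u v w).2 - (gap u v w).1 = ((Jiv w u v).2 - (Jiv w u v).1)/3 := by
    simp only [gap]; ring
  refine ⟨by simp only [gap]; linarith, by linarith [e, h2, div_pos (by linarith : (0:ℝ) < (Jiv w u v).2 - (Jiv w u v).1) (by norm_num : (0:ℝ) < 3)], by simp only [gap]; linarith, ?_⟩
  rw [e, h4, pow_succ, div_div]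

lemma gap_subset_Ioo {u v : ℝ} (h : u < v) (w : List Bool) :
    Icc (gap u v w).1 (gap u v w).2 ⊆ Ioo u v := by
  obtain ⟨h1, h2, h3, _⟩ := gap_sub h w
  obtain ⟨j1, _, j3, _⟩ := Jiv_prop w u v h
  intro x hx
  simp only [mem_Icc] at hx
  exact ⟨by linarith [hx.1, hx.2], by linarith [hx.1, hx.2]⟩

lemma Jiv_disj (w : List Bool) : ∀ w' : List Bool, ∀ u v : ℝ, u < v →
    w.length = w'.length → w ≠ w' → ∀ x : ℝ,
    x ∈ Icc (Jiv w u v).1 (Jiv w u v).2 → x ∈ Icc (Jiv w' u v).1 (Jiv w' u v).2 → False := by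
  induction w with
  | nil =>
    intro w' u v _ hlen hne
    cases w' with
    | nil => exact absurd rfl hne
    | cons b t => simp at hlen
  | cons b w ih =>
    intro w' u v h hlen hne
    cases w' with
    | nil => simp at hlen
    | cons b' w' =>
      intro x hx1 hx2
      by_cases hb : b = b'
      · subst hb
        have hne' : w ≠ w' := fun he => hne (by rw [he])
        have hlen' : w.length = w'.length := by simpa using hlen
        cases b
        · rw [Jiv_cons_false] at hx1 hx2
          exact ih w' u (u + (v - u)/3) (by linarith) hlen' hne' x hx1 hx2
        · rw [Jiv_cons_true] at hx1 hx2
          exact ih w' (v - (v - u)/3) v (by linarith) hlen' hne' x hx1 hx2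
      · simp only [mem_Icc] at hx1 hx2
        cases b
        · cases b'
          · exact absurd rfl hb
          · rw [Jiv_cons_false] at hx1
            rw [Jiv_cons_true] at hx2
            obtain ⟨a1, _, a3, _⟩ := Jiv_prop w u (u + (v - u)/3) (by linarith)
            obtain ⟨c1, _, c3, _⟩ := Jiv_prop w' (v - (v - u)/3) v (by linarith)
            linarith [hx1.2, hx2.1]
        · cases b'
          · rw [Jiv_cons_true] at hx1
            rw [Jiv_cons_false] at hx2
            obtain ⟨a1, _, a3, _⟩ := Jiv_prop w (v - (v - u)/3) v (by linarith)
            obtain ⟨c1, _, c3, _⟩ := Jiv_prop w' u (u + (v - u)/3) (by linarith)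
            linarith [hx1.1, hx2.2]
          · exact absurd rfl hb

end S12
namespace S12

lemma Jiv_append (t₁ t₂ : List Bool) : ∀ u v : ℝ,
    Jiv (t₁ ++ t₂) u v = Jiv t₂ (Jiv t₁ u v).1 (Jiv t₁ u v).2 := by
  induction t₁ with
  | nil => intro u v; simp
  | cons b t ih =>
    intro u v
    cases b
    · rw [List.cons_append, Jiv_cons_false, Jiv_cons_false, ih]
    · rw [List.cons_append, Jiv_cons_true, Jiv_cons_true, ih]

lemma Jiv_mono (t₁ t₂ : List Bool) (u v : ℝ) (h : u < v) :
    Icc (Jiv (t₁ ++ t₂) u v).1 (Jiv (t₁ ++ t₂) u v).2 ⊆ Icc (Jiv t₁ u v).1 (Jiv t₁ u v).2 := by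
  rw [Jiv_append]
  obtain ⟨h1, h2, h3, _⟩ := Jiv_prop t₂ (Jiv t₁ u v).1 (Jiv t₁ u v).2 (Jiv_prop t₁ u v h).2.1
  exact Icc_subset_Icc h1 h3

lemma gap_subset_JIcc {u v : ℝ} (h : u < v) (w : List Bool) :
    Icc (gap u v w).1 (gap u v w).2 ⊆ Icc (Jiv w u v).1 (Jiv w u v).2 := by
  obtain ⟨h1, h2, h3, _⟩ := gap_sub h w
  exact Icc_subset_Icc h1.le h3.le

lemma gap_disj_aux {u v : ℝ} (h : u < v) (w w' : List Bool) (hlen : w.length ≤ w'.length)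
    (hne : w ≠ w') (x : ℝ)
    (h1 : x ∈ Icc (gap u v w).1 (gap u v w).2)
    (h2 : x ∈ Icc (gap u v w').1 (gap u v w').2) : False := by
  rcases eq_or_lt_of_le hlen with heq | hlt
  · exact Jiv_disj w w' u v h heq hne x (gap_subset_JIcc h w h1) (gap_subset_JIcc h w' h2)
  · set k := w.length with hk
    by_cases hw : w'.take k = w
    · -- w is a proper prefix of w'
      have hdec : w' = (w ++ [w'[k]]) ++ w'.drop (k+1) := by
        conv_lhs => rw [← List.take_append_drop k w']
        rw [List.drop_eq_getElem_cons hlt, hw]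
        simp
      -- x is in the open J-interval of w'
      obtain ⟨g1, g2, g3, _⟩ := gap_sub h w'
      have hxo : (Jiv w' u v).1 < x ∧ x < (Jiv w' u v).2 := by
        simp only [mem_Icc] at h2
        constructor <;> linarith [h2.1, h2.2]
      -- bounds from the (k+1)-prefix
      have hvp := Jiv_prop w' u v h
      have hmono := Jiv_mono (w ++ [w'[k]]) (w'.drop (k+1)) u v h
      rw [← hdec] at hmono
      have hb1 : (Jiv (w ++ [w'[k]]) u v).1 ≤ (Jiv w' u v).1 ∧
          (Jiv w' u v).2 ≤ (Jiv (w ++ [w'[k]]) u v).2 := by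
        have m1 := hmono ⟨le_refl _, hvp.2.1.le⟩
        have m2 := hmono ⟨hvp.2.1.le, le_refl _⟩
        simp only [mem_Icc] at m1 m2
        exact ⟨m1.1, m2.2⟩
      simp only [mem_Icc] at h1
      obtain ⟨j1, j2, j3, _⟩ := Jiv_prop w u v h
      cases hc : w'[k]
      · have : Jiv (w ++ [false]) u v =
            ((Jiv w u v).1, (Jiv w u v).1 + ((Jiv w u v).2 - (Jiv w u v).1)/3) := by
          rw [Jiv_append]; rfl
        rw [hc] at hb1
        rw [this] at hb1
        have hg1 : (gap u v w).1 = (Jiv w u v).1 + ((Jiv w u v).2 - (Jiv w u v).1)/3 := rfl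
        linarith [h1.1, hxo.2, hb1.2]
      · have : Jiv (w ++ [true]) u v =
            ((Jiv w u v).2 - ((Jiv w u v).2 - (Jiv w u v).1)/3, (Jiv w u v).2) := by
          rw [Jiv_append]; rfl
        rw [hc] at hb1
        rw [this] at hb1
        have hg2 : (gap u v w).2 = (Jiv w u v).2 - ((Jiv w u v).2 - (Jiv w u v).1)/3 := rfl
        linarith [h1.2, hxo.1, hb1.1]
    · -- the k-prefixes differ
      have hlen' : w.length = (w'.take k).length := by
        rw [List.length_take]; omega
      have hx1 : x ∈ Icc (Jiv w u v).1 (Jiv w u v).2 := gap_subset_JIcc h w h1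
      have hx2 : x ∈ Icc (Jiv (w'.take k) u v).1 (Jiv (w'.take k) u v).2 := by
        have := Jiv_mono (w'.take k) (w'.drop k) u v h
        rw [List.take_append_drop] at this
        exact this (gap_subset_JIcc h w' h2)
      exact Jiv_disj w (w'.take k) u v h hlen' (fun he => hw he.symm) x hx1 hx2

lemma gap_disj {u v : ℝ} (h : u < v) (w w' : List Bool) (hne : w ≠ w') (x : ℝ)
    (h1 : x ∈ Icc (gap u v w).1 (gap u v w).2)
    (h2 : x ∈ Icc (gap u v w').1 (gap u v w').2) : False := by
  rcases le_total w.length w'.length with hl | hl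
  · exact gap_disj_aux h w w' hl hne x h1 h2
  · exact gap_disj_aux h w' w hl (fun he => hne he.symm) x h2 h1

end S12
namespace S12

lemma ivalF_lt (t : List (List Bool)) : ∀ u v : ℝ, u < v → (ivalF t u v).1 < (ivalF t u v).2 := by
  induction t with
  | nil => intro u v h; exact h
  | cons w t ih => intro u v h; rw [ivalF_cons]; exact ih _ _ (gap_sub h w).2.1

lemma ivalF_append (t₁ t₂ : List (List Bool)) : ∀ u v : ℝ,
    ivalF (t₁ ++ t₂) u v = ivalF t₂ (ivalF t₁ u v).1 (ivalF t₁ u v).2 := by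
  induction t₁ with
  | nil => intro u v; simp
  | cons w t ih => intro u v; rw [List.cons_append, ivalF_cons, ivalF_cons, ih]

lemma ivalF_subset_Icc (t : List (List Bool)) : ∀ u v : ℝ, u < v →
    Icc (ivalF t u v).1 (ivalF t u v).2 ⊆ Icc u v := by
  induction t with
  | nil => intro u v _; simp
  | cons w t ih =>
    intro u v h
    rw [ivalF_cons]
    exact (ih _ _ (gap_sub h w).2.1).trans ((gap_subset_Ioo h w).trans Ioo_subset_Icc_self)

lemma ivalF_subset_Ioo (t : List (List Bool)) (ht : t ≠ []) (u v : ℝ) (h : u < v) :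
    Icc (ivalF t u v).1 (ivalF t u v).2 ⊆ Ioo u v := by
  cases t with
  | nil => exact absurd rfl ht
  | cons w t =>
    rw [ivalF_cons]
    exact (ivalF_subset_Icc t _ _ (gap_sub h w).2.1).trans (gap_subset_Ioo h w)

lemma ivalF_Ioo_subset (t : List (List Bool)) (u v : ℝ) (h : u < v) :
    Ioo (ivalF t u v).1 (ivalF t u v).2 ⊆ Ioo u v := by
  cases t with
  | nil => simp
  | cons w t' => exact Ioo_subset_Icc_self.trans (ivalF_subset_Ioo (w :: t') (by simp) u v h)

lemma ivalF_mono (t₁ t₂ : List (List Bool)) (u v : ℝ) (h : u < v) :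
    Ioo (ivalF (t₁ ++ t₂) u v).1 (ivalF (t₁ ++ t₂) u v).2 ⊆
    Ioo (ivalF t₁ u v).1 (ivalF t₁ u v).2 := by
  rw [ivalF_append]
  exact ivalF_Ioo_subset t₂ _ _ (ivalF_lt t₁ u v h)

lemma ivalF_take (t : List (List Bool)) (u v : ℝ) (h : u < v) (k : ℕ) {x : ℝ}
    (hx : x ∈ Ioo (ivalF t u v).1 (ivalF t u v).2) :
    x ∈ Ioo (ivalF (t.take k) u v).1 (ivalF (t.take k) u v).2 := by
  have := ivalF_mono (t.take k) (t.drop k) u v h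
  rw [List.take_append_drop] at this
  exact this hx

lemma ivalF_len (t : List (List Bool)) : ∀ u v : ℝ, u < v →
    (ivalF t u v).2 - (ivalF t u v).1 ≤ (v - u)/3^t.length := by
  induction t with
  | nil => intro u v h; simp
  | cons w t ih =>
    intro u v h
    rw [ivalF_cons, List.length_cons]
    have h1 := (gap_sub h w).2.1
    have hle : (gap u v w).2 - (gap u v w).1 ≤ (v - u)/3 := by
      rw [(gap_sub h w).2.2.2]
      apply div_le_div_of_nonneg_left (by linarith) (by norm_num)
      calc (3:ℝ) = 3^1 := (pow_one 3).symm
        _ ≤ 3^(w.length+1) := by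
            apply pow_le_pow_right₀ (by norm_num) (by omega)
    calc (ivalF t (gap u v w).1 (gap u v w).2).2 - (ivalF t (gap u v w).1 (gap u v w).2).1
        ≤ ((gap u v w).2 - (gap u v w).1)/3^t.length := ih _ _ h1
      _ ≤ ((v - u)/3)/3^t.length := by gcongr
      _ = (v - u)/3^(t.length + 1) := by rw [div_div, pow_succ, mul_comm]

lemma ivalF_uniq (t : List (List Bool)) : ∀ t' : List (List Bool), ∀ u v : ℝ, u < v →
    t.length ≤ t'.length → ∀ x : ℝ,
    x ∈ Ioo (ivalF t u v).1 (ivalF t u v).2 →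
    x ∈ Ioo (ivalF t' u v).1 (ivalF t' u v).2 → t = t'.take t.length := by
  induction t with
  | nil => intro t' u v _ _ x _ _; simp
  | cons w t ih =>
    intro t' u v h hlen x hx1 hx2
    cases t' with
    | nil => simp at hlen
    | cons w' t' =>
      have hww : w = w' := by
        by_contra hne
        have m1 : x ∈ Icc (gap u v w).1 (gap u v w).2 := by
          rw [ivalF_cons] at hx1
          exact (ivalF_subset_Icc t _ _ (gap_sub h w).2.1) (Ioo_subset_Icc_self hx1)
        have m2 : x ∈ Icc (gap u v w').1 (gap u v w').2 := by
          rw [ivalF_cons] at hx2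
          exact (ivalF_subset_Icc t' _ _ (gap_sub h w').2.1) (Ioo_subset_Icc_self hx2)
        exact gap_disj h w w' hne x m1 m2
      subst hww
      rw [ivalF_cons] at hx1 hx2
      have := ih t' (gap u v w).1 (gap u v w).2 (gap_sub h w).2.1 (by simpa using hlen) x hx1 hx2
      simp [List.take_cons, ← this]

/-- membership in the Cantor set of the scheme on `[u,v]` -/
def CantorMem (u v x : ℝ) : Prop :=
  ∀ n : ℕ, ∃ w : List Bool, w.length = n ∧ x ∈ Icc (Jiv w u v).1 (Jiv w u v).2

lemma cantorMem_of_no_gap {u v x : ℝ} (h : u < v) (hx : x ∈ Icc u v)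
    (hg : ∀ w : List Bool, x ∉ Ioo (gap u v w).1 (gap u v w).2) : CantorMem u v x := by
  intro n
  induction n with
  | zero => exact ⟨[], rfl, by simpa using hx⟩
  | succ n ih =>
    obtain ⟨w, hwl, hw⟩ := ih
    simp only [mem_Icc] at hw
    rcases le_or_gt x (gap u v w).1 with hc | hc
    · refine ⟨w ++ [false], by simp [hwl], ?_⟩
      rw [Jiv_append]
      have : Jiv [false] (Jiv w u v).1 (Jiv w u v).2 =
          ((Jiv w u v).1, (Jiv w u v).1 + ((Jiv w u v).2 - (Jiv w u v).1)/3) := rfl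
      rw [this]
      have hg1 : (gap u v w).1 = (Jiv w u v).1 + ((Jiv w u v).2 - (Jiv w u v).1)/3 := rfl
      exact ⟨hw.1, by rw [← hg1]; exact hc⟩
    · rcases lt_or_ge x (gap u v w).2 with hc2 | hc2
      · exact absurd ⟨hc, hc2⟩ (hg w)
      · refine ⟨w ++ [true], by simp [hwl], ?_⟩
        rw [Jiv_append]
        have : Jiv [true] (Jiv w u v).1 (Jiv w u v).2 =
            ((Jiv w u v).2 - ((Jiv w u v).2 - (Jiv w u v).1)/3, (Jiv w u v).2) := rfl
        rw [this]
        have hg2 : (gap u v w).2 = (Jiv w u v).2 - ((Jiv w u v).2 - (Jiv w u v).1)/3 := rfl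
        exact ⟨by rw [← hg2]; exact hc2, hw.2⟩

/-- density of gaps of both parities near Cantor points -/
lemma gap_density {u v x : ℝ} (h : u < v) (hx : CantorMem u v x) {ε : ℝ} (hε : 0 < ε)
    (p : Bool) : ∃ w : List Bool, bit w = p ∧
    Icc (gap u v w).1 (gap u v w).2 ⊆ Ioo u v ∩ Ioo (x - ε) (x + ε) := by
  obtain ⟨n₀, hn₀⟩ : ∃ n : ℕ, (v - u)/3^n < ε := by
    obtain ⟨n, hn⟩ := pow_unbounded_of_one_lt ((v - u)/ε) (by norm_num : (1:ℝ) < 3)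
    exact ⟨n, by rw [div_lt_iff₀ (by positivity)]; rw [div_lt_iff₀ hε] at hn; linarith [mul_comm ε (3^n:ℝ)]⟩
  set n : ℕ := if p = decide (n₀ % 2 = 1) then n₀ else n₀ + 1 with hn
  have hpar : decide (n % 2 = 1) = p := by
    rw [hn]
    cases p <;> by_cases hh : n₀ % 2 = 1 <;> simp [hh] <;> omega
  have hge : n₀ ≤ n := by rw [hn]; split <;> omega
  have hnε : (v - u)/3^n < ε := by
    calc (v - u)/3^n ≤ (v - u)/3^n₀ := by
          apply div_le_div_of_nonneg_left (by linarith) (by positivity)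
          apply pow_le_pow_right₀ (by norm_num) hge
      _ < ε := hn₀
  obtain ⟨w, hwl, hw⟩ := hx n
  refine ⟨w, by rw [bit, hwl, hpar], ?_⟩
  intro y hy
  refine ⟨gap_subset_Ioo h w hy, ?_⟩
  have hyJ : y ∈ Icc (Jiv w u v).1 (Jiv w u v).2 := gap_subset_JIcc h w hy
  obtain ⟨_, _, _, hlen⟩ := Jiv_prop w u v h
  simp only [mem_Icc] at hyJ hw
  rw [hwl] at hlen
  constructor <;> linarith [hyJ.1, hyJ.2, hw.1, hw.2, hnε, hlen]

/-- the residual point `u + (v-u)/3` lies in no gap -/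
lemma residual_point {u v : ℝ} (h : u < v) :
    u + (v - u)/3 ∈ Ioo u v ∧ ∀ w : List Bool, u + (v - u)/3 ∉ Ioo (gap u v w).1 (gap u v w).2 := by
  constructor
  · simp only [mem_Ioo]; constructor <;> linarith
  · set x := u + (v - u)/3 with hx
    have key : ∀ k : ℕ, ∀ u' v' : ℝ, (Jiv (List.replicate k true) u' v').2 = v' := by
      intro k
      induction k with
      | zero => intro u' v'; rfl
      | succ k ih => intro u' v'; rw [List.replicate_succ, Jiv_cons_true, ih]
    intro w hw
    have hxJ : x ∈ Ioo (Jiv w u v).1 (Jiv w u v).2 := by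
      obtain ⟨g1, _, g3, _⟩ := gap_sub h w
      simp only [mem_Ioo] at hw ⊢
      exact ⟨by linarith [hw.1], by linarith [hw.2]⟩
    cases w with
    | nil =>
      simp only [mem_Ioo] at hw
      have : (gap u v []).1 = u + (v - u)/3 := by simp [gap]
      rw [this] at hw
      exact absurd hw.1 (lt_irrefl x)
    | cons b t =>
      set w' : List Bool := false :: List.replicate t.length true with hw'
      have hlen : (b :: t).length = w'.length := by simp [hw']
      have hx2 : x = (Jiv w' u v).2 := by
        rw [hw', Jiv_cons_false, key]
      by_cases hne : (b :: t) = w'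
      · rw [hne] at hxJ
        rw [← hx2] at hxJ
        exact absurd hxJ.2 (lt_irrefl x)
      · have hvw' : (Jiv w' u v).1 ≤ (Jiv w' u v).2 :=
          (Jiv_prop w' u v h).2.1.le
        exact Jiv_disj (b :: t) w' u v h hlen hne x (Ioo_subset_Icc_self hxJ)
          (by rw [← hx2] at hvw' ⊢; exact ⟨by rw [hx2]; exact (Jiv_prop w' u v h).2.1.le, le_refl x⟩)

/-- nested branch intersections are nonempty -/
lemma branch_point {u v : ℝ} (h : u < v) (A : ℕ → List Bool) :
    ∃ x : ℝ, ∀ n : ℕ, x ∈ Ioo (ivalF ((List.range n).map A) u v).1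
      (ivalF ((List.range n).map A) u v).2 := by
  set L : ℕ → ℝ := fun n => (ivalF ((List.range n).map A) u v).1 with hL
  set R : ℕ → ℝ := fun n => (ivalF ((List.range n).map A) u v).2 with hR
  have hstep : ∀ n, Icc (L (n+1)) (R (n+1)) ⊆ Ioo (L n) (R n) := by
    intro n
    have : (List.range (n+1)).map A = (List.range n).map A ++ [A n] := by
      rw [List.range_succ, List.map_append]; rfl
    simp only [hL, hR, this]
    rw [ivalF_append]
    exact ivalF_subset_Ioo [A n] (by simp) _ _ (ivalF_lt _ u v h)
  have hlt : ∀ n, L n < R n := fun n => ivalF_lt _ u v h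
  have hmonoL : ∀ n, L n < L (n+1) := fun n => ((hstep n) ⟨le_refl _, (hlt (n+1)).le⟩).1
  have hmonoR : ∀ n, R (n+1) < R n := fun n => ((hstep n) ⟨(hlt (n+1)).le, le_refl _⟩).2
  have hLmono : Monotone L := monotone_nat_of_le_succ (fun n => (hmonoL n).le)
  have hRanti : Antitone R := antitone_nat_of_succ_le (fun n => (hmonoR n).le)
  have hLR : ∀ n m : ℕ, L n ≤ R m := by
    intro n m
    rcases le_total n m with hnm | hnm
    · exact (hLmono hnm).trans (hlt m).le
    · exact (hlt n).le.trans (hRanti hnm)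
  have hbdd : BddAbove (Set.range L) := ⟨R 0, by rintro y ⟨n, rfl⟩; exact hLR n 0⟩
  refine ⟨⨆ n, L n, fun n => ?_⟩
  constructor
  · calc L n < L (n+1) := hmonoL n
      _ ≤ ⨆ n, L n := le_ciSup hbdd (n+1)
  · calc (⨆ n, L n) ≤ R (n+1) := ciSup_le (fun k => hLR k (n+1))
      _ < R n := hmonoR n

end S12
namespace S12

lemma Lgen.le_def {σ : Type*} {f g : Lgen σ} :
    f ≤ g ↔ ∀ (n : ℕ) (s : σ), f.toFun n = some s → g.toFun n = some s := Iff.rfl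

lemma Lgen.ext' {σ : Type*} {f g : Lgen σ} (h : ∀ n, f.toFun n = g.toFun n) : f = g := by
  cases f; cases g
  simp only [Lgen.mk.injEq]
  exact funext h

@[simp] lemma Lgen.ofList_toFun {σ : Type*} (l : List σ) (n : ℕ) :
    (Lgen.ofList l).toFun n = l[n]? := rfl

lemma Lgen.down {σ : Type*} (z : Lgen σ) {n m : ℕ} (h : n ≤ m) (hm : z.toFun m ≠ none) :
    z.toFun n ≠ none := by
  obtain ⟨k, rfl⟩ := Nat.exists_eq_add_of_le h
  clear h
  induction k with
  | zero => simpa using hm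
  | succ k ih => exact ih (z.init _ (by rwa [Nat.add_succ] at hm))

lemma Lgen.ofList_le_iff {σ : Type*} (l : List σ) (z : Lgen σ) :
    Lgen.ofList l ≤ z ↔ ∀ (k : ℕ) (h : k < l.length), z.toFun k = some l[k] := by
  constructor
  · intro hle k h
    exact hle k l[k] (by simp [List.getElem?_eq_getElem h])
  · intro hk n s hn
    rw [Lgen.ofList_toFun, List.getElem?_eq_some_iff] at hn
    obtain ⟨h, rfl⟩ := hn
    exact hk n h

@[simp] lemma Lgen.ofList_nil_le (z : Lgen Bool) : Lgen.ofList ([] : List Bool) ≤ z := by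
  rw [Lgen.ofList_le_iff]; intro k h; simp at h

/-- truncation of an element of `Lgen` -/
def trunc (z : L2) (m : ℕ) : L2 where
  toFun k := if k < m then z.toFun k else none
  init n h := by
    change (if n + 1 < m then z.toFun (n+1) else none) ≠ none at h
    change (if n < m then z.toFun n else none) ≠ none
    by_cases hn : n + 1 < m
    · rw [if_pos hn] at h
      rw [if_pos (by omega)]
      exact z.init n h
    · rw [if_neg hn] at h
      exact absurd rfl h

lemma trunc_le (z : L2) (m : ℕ) : trunc z m ≤ z := by
  intro n s hn
  simp only [trunc] at hn
  split at hn
  · exact hn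
  · exact absurd hn (by simp)

lemma trunc_mono (z : L2) {n m : ℕ} (h : n ≤ m) : trunc z n ≤ trunc z m := by
  intro k s hk
  simp only [trunc] at hk ⊢
  split at hk
  · rw [if_pos (by omega)]; exact hk
  · exact absurd hk (by simp)

@[simp] lemma trunc_toFun (z : L2) (m k : ℕ) :
    (trunc z m).toFun k = if k < m then z.toFun k else none := rfl

lemma isLUB_trunc (z : L2) : IsLUB (Set.range (trunc z)) z := by
  constructor
  · rintro y ⟨n, rfl⟩; exact trunc_le z n
  · intro w hw
    intro k s hk
    have := hw ⟨k + 1, rfl⟩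
    exact this k s (by simp [hk, Nat.lt_succ_self])

/-- principal up-sets of finite elements are Scott-open -/
lemma isOpen_up (l : List Bool) : IsOpen {z : L2 | Lgen.ofList l ≤ z} := by
  show (scottTopology L2).IsOpen _
  constructor
  · intro y z hyz hy
    exact le_trans hy hyz
  · intro d hdne hdir y hlub hy
    rcases List.eq_nil_or_concat l with rfl | ⟨l', b, rfl⟩
    · obtain ⟨c, hc⟩ := hdne
      exact ⟨c, hc, by simp⟩
    · simp only [List.concat_eq_append] at hy ⊢
      rw [mem_setOf_eq] at hy
      set n' : ℕ := l'.length with hn'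
      have hlen : (l' ++ [b]).length = n' + 1 := by simp [hn']
      by_cases hc : ∃ c ∈ d, c.toFun n' ≠ none
      · obtain ⟨c, hcd, hcn⟩ := hc
        refine ⟨c, hcd, ?_⟩
        rw [mem_setOf_eq, Lgen.ofList_le_iff]
        intro k hk
        have hkn : k ≤ n' := by omega
        have hck : c.toFun k ≠ none := Lgen.down c hkn hcn
        obtain ⟨v, hv⟩ := Option.ne_none_iff_exists'.1 hck
        have hyv : y.toFun k = some v := (hlub.1 hcd) k v hv
        have hyl : y.toFun k = some (l' ++ [b])[k] := by
          rw [Lgen.ofList_le_iff] at hy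
          exact hy k (by omega)
        rw [hyv] at hyl
        rw [hv]
        exact hyl
      · push_neg at hc
        exfalso
        have hub : trunc y n' ∈ upperBounds d := by
          intro c hcd
          intro k s hk
          have hkn : k < n' := by
            by_contra hkk
            exact (Lgen.down c (by omega : n' ≤ k) (by rw [hk]; simp)) (hc c hcd)
          simp only [trunc_toFun, if_pos hkn]
          exact (hlub.1 hcd) k s hk
        have hyle : y ≤ trunc y n' := hlub.2 hub
        have hyn : y.toFun n' = some (l' ++ [b])[n'] := by
          rw [Lgen.ofList_le_iff] at hy
          exact hy n' (by omega)
        have := hyle n' _ hyn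
        rw [trunc_toFun, if_neg (lt_irrefl n')] at this
        exact nomatch this

/-- a set all of whose points contain principal neighborhoods is open -/
lemma isOpen_of_up (W : Set L2)
    (h : ∀ z ∈ W, ∃ l : List Bool, Lgen.ofList l ≤ z ∧ {y : L2 | Lgen.ofList l ≤ y} ⊆ W) :
    IsOpen W := by
  have : W = ⋃ (l : List Bool) (_ : {y : L2 | Lgen.ofList l ≤ y} ⊆ W), {y : L2 | Lgen.ofList l ≤ y} := by
    apply Subset.antisymm
    · intro z hz
      obtain ⟨l, hl1, hl2⟩ := h z hz
      exact mem_iUnion.2 ⟨l, mem_iUnion.2 ⟨hl2, hl1⟩⟩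
    · intro z hz
      obtain ⟨l, hl⟩ := mem_iUnion.1 hz
      obtain ⟨hsub, hmem⟩ := mem_iUnion.1 hl
      exact hsub hmem
  rw [this]
  exact isOpen_iUnion fun l => isOpen_iUnion fun hsub => isOpen_up l

/-- values list of an element of L2 -/
noncomputable def zlist (z : L2) (n : ℕ) : List Bool :=
  (List.range n).map (fun k => (z.toFun k).iget)

@[simp] lemma zlist_length (z : L2) (n : ℕ) : (zlist z n).length = n := by simp [zlist]

lemma zlist_getElem (z : L2) (n k : ℕ) (h : k < n) :
    (zlist z n)[k]'(by simpa using h) = (z.toFun k).iget := by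
  simp [zlist]

/-- every Scott-open set containing `z` contains a principal up-set around `z` -/
lemma exists_up_of_open {U : Set L2} (hU : IsOpen U) {z : L2} (hz : z ∈ U) :
    ∃ l : List Bool, Lgen.ofList l ≤ z ∧ {y : L2 | Lgen.ofList l ≤ y} ⊆ U := by
  obtain ⟨hup, hsc⟩ := hU
  by_cases hfin : ∃ n, z.toFun n = none
  · set n₀ := Nat.find hfin with hn₀
    have hz0 : ∀ k, n₀ ≤ k → z.toFun k = none := by
      intro k hk
      by_contra hc
      exact (Lgen.down z hk hc) (Nat.find_spec hfin)
    have hzlt : ∀ k, k < n₀ → z.toFun k ≠ none := fun k hk => Nat.find_min hfin hk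
    have heq : Lgen.ofList (zlist z n₀) = z := by
      apply Lgen.ext'
      intro k
      rcases lt_or_ge k n₀ with hk | hk
      · rw [Lgen.ofList_toFun, List.getElem?_eq_getElem (by simpa using hk), zlist_getElem z n₀ k hk]
        obtain ⟨v, hv⟩ := Option.ne_none_iff_exists'.1 (hzlt k hk)
        rw [hv]
      · rw [Lgen.ofList_toFun, List.getElem?_eq_none (by simpa using hk), hz0 k hk]
    exact ⟨zlist z n₀, by rw [heq], fun y hy => hup (by rw [heq] at hy; exact hy) hz⟩
  · push_neg at hfin
    obtain ⟨c, ⟨⟨n, rfl⟩, hcU⟩⟩ := hsc (Set.range (trunc z)) ⟨trunc z 0, ⟨0, rfl⟩⟩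
      (by
        rintro c1 ⟨n1, rfl⟩ c2 ⟨n2, rfl⟩
        exact ⟨trunc z (max n1 n2), ⟨max n1 n2, rfl⟩, trunc_mono z (le_max_left _ _),
          trunc_mono z (le_max_right _ _)⟩)
      z (isLUB_trunc z) hz
    have heq : Lgen.ofList (zlist z n) = trunc z n := by
      apply Lgen.ext'
      intro k
      rcases lt_or_ge k n with hk | hk
      · rw [Lgen.ofList_toFun, List.getElem?_eq_getElem (by simpa using hk), zlist_getElem z n k hk]
        simp only [trunc_toFun, if_pos hk]
        obtain ⟨v, hv⟩ := Option.ne_none_iff_exists'.1 (hfin k)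
        rw [hv]
      · rw [Lgen.ofList_toFun, List.getElem?_eq_none (by simpa using hk), trunc_toFun,
          if_neg (by omega : ¬ k < n)]
    refine ⟨zlist z n, by rw [heq]; exact trunc_le z n, fun y hy => ?_⟩
    rw [heq] at hy
    exact hup hy hcU

end S12
namespace S12

lemma Jiv_deg (w : List Bool) : ∀ u v : ℝ, v ≤ u → (Jiv w u v).2 ≤ (Jiv w u v).1 := by
  induction w with
  | nil => intro u v h; exact h
  | cons b w ih =>
    intro u v h
    cases b
    · rw [Jiv_cons_false]; exact ih _ _ (by linarith)
    · rw [Jiv_cons_true]; exact ih _ _ (by linarith)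

lemma ivalF_deg (t : List (List Bool)) : ∀ u v : ℝ, v ≤ u → (ivalF t u v).2 ≤ (ivalF t u v).1 := by
  induction t with
  | nil => intro u v h; exact h
  | cons w t ih =>
    intro u v h
    rw [ivalF_cons]
    apply ih
    have := Jiv_deg w u v h
    simp only [gap]
    linarith

lemma lt_of_ival_mem {a b x : ℝ} {t : List (List Bool)}
    (hx : x ∈ Ioo (ivalF t a b).1 (ivalF t a b).2) : a < b := by
  by_contra hc
  have := ivalF_deg t a b (by linarith)
  simp only [mem_Ioo] at hx
  linarith [hx.1, hx.2]

open Classical in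
noncomputable def FF (a b x : ℝ) : L2 where
  toFun n := if h : ∃ t : List (List Bool), t.length = n + 1 ∧
      x ∈ Ioo (ivalF t a b).1 (ivalF t a b).2 then
      some (bit ((Classical.choose h).getD n [])) else none
  init n h := by
    simp only [ne_eq, dite_eq_right_iff, not_forall] at h ⊢
    obtain ⟨ht, -⟩ := h
    obtain ⟨t, hlen, hx⟩ := ht
    have hab : a < b := lt_of_ival_mem hx
    refine ⟨⟨t.take (n+1), by rw [List.length_take]; omega, ivalF_take t a b hab (n+1) hx⟩, by simp⟩

lemma getD_take {α : Type*} (t : List α) (n : ℕ) (d : α) :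
    (t.take (n+1)).getD n d = t.getD n d := by
  simp only [List.getD_eq_getElem?_getD]
  congr 1
  rw [List.getElem?_take, if_pos (by omega : n < n + 1)]

lemma FF_spec {a b x : ℝ} (hab : a < b) (t : List (List Bool)) (n : ℕ) (hn : n < t.length)
    (hx : x ∈ Ioo (ivalF t a b).1 (ivalF t a b).2) :
    (FF a b x).toFun n = some (bit (t.getD n [])) := by
  classical
  have hw : ∃ t' : List (List Bool), t'.length = n + 1 ∧
      x ∈ Ioo (ivalF t' a b).1 (ivalF t' a b).2 :=
    ⟨t.take (n+1), by rw [List.length_take]; omega, ivalF_take t a b hab (n+1) hx⟩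
  show dite _ _ _ = _
  rw [dif_pos hw]
  congr 1
  obtain ⟨hlen', hx'⟩ := Classical.choose_spec hw
  have heq := ivalF_uniq (Classical.choose hw) (t.take (n+1)) a b hab
    (by rw [hlen', List.length_take]; omega) x hx' (ivalF_take t a b hab (n+1) hx)
  rw [List.take_of_length_le (by rw [hlen', List.length_take]; omega)] at heq
  rw [heq, getD_take]

lemma FF_some {a b x : ℝ} {n : ℕ} {p : Bool} (h : (FF a b x).toFun n = some p) :
    ∃ t : List (List Bool), t.length = n + 1 ∧
      x ∈ Ioo (ivalF t a b).1 (ivalF t a b).2 ∧ bit (t.getD n []) = p := by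
  classical
  by_cases hw : ∃ t : List (List Bool), t.length = n + 1 ∧
      x ∈ Ioo (ivalF t a b).1 (ivalF t a b).2
  · obtain ⟨hlen', hx'⟩ := Classical.choose_spec hw
    refine ⟨Classical.choose hw, hlen', hx', ?_⟩
    have : (FF a b x).toFun n = some (bit ((Classical.choose hw).getD n [])) := by
      show dite _ _ _ = _
      rw [dif_pos hw]
    rw [this] at h
    exact (Option.some_injective _ h)
  · have : (FF a b x).toFun n = none := by
      show dite _ _ _ = _
      rw [dif_neg hw]
    rw [this] at h
    exact nomatch h

def bitsOf (t : List (List Bool)) : List Bool := t.map bit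

@[simp] lemma bitsOf_length (t : List (List Bool)) : (bitsOf t).length = t.length := by
  simp [bitsOf]

lemma bitsOf_getElem (t : List (List Bool)) (k : ℕ) (h : k < t.length) :
    (bitsOf t)[k]'(by simpa using h) = bit t[k] := by simp [bitsOf]

lemma getD_eq_getElem' {α : Type*} (t : List α) (k : ℕ) (d : α) (h : k < t.length) :
    t.getD k d = t[k] := List.getD_eq_getElem t d h

/-- forward direction: membership in a cell forces the prefix -/
lemma le_FF {a b x : ℝ} (hab : a < b) (t : List (List Bool))
    (hx : x ∈ Ioo (ivalF t a b).1 (ivalF t a b).2) :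
    Lgen.ofList (bitsOf t) ≤ FF a b x := by
  rw [Lgen.ofList_le_iff]
  intro k hk
  have hk' : k < t.length := by simpa using hk
  rw [FF_spec hab t k hk' hx]
  congr 1
  rw [bitsOf_getElem t k hk', getD_eq_getElem' t k [] hk']

/-- converse: a forced prefix comes from a cell -/
lemma FF_le {a b x : ℝ} {l : List Bool} (hl : l ≠ [])
    (h : Lgen.ofList l ≤ FF a b x) :
    ∃ t : List (List Bool), t.length = l.length ∧ bitsOf t = l ∧
      x ∈ Ioo (ivalF t a b).1 (ivalF t a b).2 := by
  have hlen : 0 < l.length := List.length_pos_iff.2 hl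
  have h1 : (FF a b x).toFun (l.length - 1) = some l[l.length - 1] := by
    rw [Lgen.ofList_le_iff] at h
    exact h (l.length - 1) (by omega)
  obtain ⟨t, htl, htx, -⟩ := FF_some h1
  have hab : a < b := lt_of_ival_mem htx
  have htl' : t.length = l.length := by omega
  refine ⟨t, htl', ?_, htx⟩
  apply List.ext_getElem (by simpa using htl')
  intro k hk1 hk2
  have hk : k < t.length := by simpa using hk1
  have e1 : (FF a b x).toFun k = some (bit (t.getD k [])) := FF_spec hab t k hk htx
  have e2 : (FF a b x).toFun k = some l[k] := by
    rw [Lgen.ofList_le_iff] at h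
    exact h k (by omega)
  rw [e1] at e2
  rw [bitsOf_getElem t k hk, ← getD_eq_getElem' t k [] hk]
  exact Option.some_injective _ e2

end S12
namespace S12

lemma FF_root {a b x : ℝ} (hx : x ∉ Ioo a b) : FF a b x = Lgen.ofList ([] : List Bool) := by
  classical
  apply Lgen.ext'
  intro n
  have hcond : ¬ ∃ t : List (List Bool), t.length = n + 1 ∧
      x ∈ Ioo (ivalF t a b).1 (ivalF t a b).2 := by
    rintro ⟨t, hlen, hxt⟩
    exact hx (ivalF_Ioo_subset t a b (lt_of_ival_mem hxt) hxt)
  show dite _ _ _ = _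
  rw [dif_neg hcond]
  simp

lemma z_some_of_le {t : List (List Bool)} {z : L2} (hz : Lgen.ofList (bitsOf t) ≤ z)
    {k : ℕ} (hk : k < t.length) : z.toFun k = some (bit t[k]) := by
  rw [Lgen.ofList_le_iff] at hz
  have := hz k (by simpa using hk)
  rwa [bitsOf_getElem t k hk] at this

lemma cell_surj {a b : ℝ} (hab : a < b) (t : List (List Bool)) (z : L2)
    (hz : Lgen.ofList (bitsOf t) ≤ z) :
    ∃ x ∈ Ioo (ivalF t a b).1 (ivalF t a b).2, FF a b x = z := by
  classical
  by_cases hfin : ∃ n, z.toFun n = none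
  · -- finite case
    set n₀ := Nat.find hfin with hn₀
    have hz0 : ∀ k, n₀ ≤ k → z.toFun k = none := fun k hk => by
      by_contra hc
      exact (Lgen.down z hk hc) (Nat.find_spec hfin)
    have hzlt : ∀ k, k < n₀ → z.toFun k ≠ none := fun k hk => Nat.find_min hfin hk
    have htn : t.length ≤ n₀ := by
      by_contra hc
      push_neg at hc
      have h1 := z_some_of_le hz hc
      have h2 : z.toFun n₀ = none := Nat.find_spec hfin
      rw [h2] at h1
      exact nomatch h1
    set t' : List (List Bool) := t ++ (List.range (n₀ - t.length)).map
      (fun i => enc ((z.toFun (t.length + i)).iget)) with ht'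
    have htl' : t'.length = n₀ := by
      rw [ht']; simp; omega
    have hkey : ∀ k, k < n₀ → z.toFun k = some (bit (t'.getD k [])) := by
      intro k hk
      rcases lt_or_ge k t.length with hkt | hkt
      · rw [List.getD_eq_getElem?_getD, ht', List.getElem?_append_left (by simpa using hkt),
          List.getElem?_eq_getElem hkt]
        simp only [Option.getD_some]
        exact z_some_of_le hz hkt
      · have hge : (t'.getD k []) = enc ((z.toFun k).iget) := by
          rw [List.getD_eq_getElem?_getD, ht',
            List.getElem?_append_right (by simpa using hkt),
            List.getElem?_eq_getElem (by simp; omega)]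
          simp only [List.getElem_map, List.getElem_range, Option.getD_some]
          have harg : t.length + (k - t.length) = k := by omega
          rw [harg]
        rw [hge, bit_enc]
        obtain ⟨v, hv⟩ := Option.ne_none_iff_exists'.1 (hzlt k hk)
        simp [hv]
    set u := (ivalF t' a b).1 with hu
    set v := (ivalF t' a b).2 with hv
    have huv : u < v := ivalF_lt t' a b hab
    obtain ⟨hres1, hres2⟩ := residual_point huv
    set x := u + (v - u)/3 with hx
    have hxt' : x ∈ Ioo (ivalF t' a b).1 (ivalF t' a b).2 := hres1
    have hxt : x ∈ Ioo (ivalF t a b).1 (ivalF t a b).2 := by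
      have := ivalF_mono t ((List.range (n₀ - t.length)).map
        (fun i => enc ((z.toFun (t.length + i)).iget))) a b hab
      rw [← ht'] at this
      exact this hxt'
    refine ⟨x, hxt, ?_⟩
    apply Lgen.ext'
    intro n
    rcases lt_or_ge n n₀ with hn | hn
    · rw [FF_spec hab t' n (by omega) hxt', ← hkey n hn]
    · rw [hz0 n hn]
      by_contra hc
      have hc0 : (FF a b x).toFun n₀ ≠ none := Lgen.down (FF a b x) hn hc
      obtain ⟨p, hp⟩ := Option.ne_none_iff_exists'.1 hc0
      obtain ⟨t'', htl'', hxt'', -⟩ := FF_some hp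
      have heq := ivalF_uniq t' t'' a b hab (by omega) x hxt' hxt''
      rw [htl'] at heq
      have hdec : t'' = t' ++ [t''[n₀]'(by omega)] := by
        conv_lhs => rw [← List.take_append_drop n₀ t'']
        rw [List.drop_eq_getElem_cons (by omega), ← heq,
          List.drop_eq_nil_of_le (by omega)]
      rw [hdec, ivalF_append] at hxt''
      exact hres2 _ hxt''
  · -- infinite case
    push_neg at hfin
    set e : ℕ → Bool := fun k => (z.toFun k).iget with he
    have hze : ∀ k, z.toFun k = some (e k) := by
      intro k
      obtain ⟨v, hv⟩ := Option.ne_none_iff_exists'.1 (hfin k)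
      rw [he]
      simp [hv]
    set A : ℕ → List Bool := fun n => if h : n < t.length then t[n] else enc (e n) with hA
    obtain ⟨x, hxA⟩ := branch_point hab A
    have hrt : (List.range t.length).map A = t := by
      apply List.ext_getElem (by simp)
      intro k hk1 hk2
      simp only [List.getElem_map, List.getElem_range]
      rw [hA]
      simp only
      rw [dif_pos (by simpa using hk2)]
    have hxt : x ∈ Ioo (ivalF t a b).1 (ivalF t a b).2 := by
      have := hxA t.length
      rwa [hrt] at this
    refine ⟨x, hxt, ?_⟩
    apply Lgen.ext'
    intro n
    have hlen : ((List.range (n+1)).map A).length = n + 1 := by simp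
    have hsp := FF_spec hab ((List.range (n+1)).map A) n (by omega) (hxA (n+1))
    have hgd : ((List.range (n+1)).map A).getD n [] = A n := by
      rw [getD_eq_getElem' _ n [] (by omega)]
      simp
    rw [hsp, hgd, hze n]
    congr 1
    simp only [hA]
    split
    · rename_i hnt
      have h2 : some (bit t[n]) = some (e n) := (z_some_of_le hz hnt).symm.trans (hze n)
      exact Option.some_injective _ h2
    · rw [bit_enc]

end S12
namespace S12

lemma ivalF_single (u v : ℝ) (w : List Bool) :
    ivalF [w] u v = ((gap u v w).1, (gap u v w).2) := rfl

lemma ivalF_snoc (a b : ℝ) (t : List (List Bool)) (w : List Bool) :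
    ivalF (t ++ [w]) a b =
      ((gap (ivalF t a b).1 (ivalF t a b).2 w).1, (gap (ivalF t a b).1 (ivalF t a b).2 w).2) := by
  rw [ivalF_append, ivalF_single]

lemma main_core {a b : ℝ} (hab : a < b) (S : Set ℝ) {x : ℝ} (hxS : x ∈ S)
    {ε : ℝ} (hε : 0 < ε) (hball : Ioo (x - ε) (x + ε) ∩ Ioo a b ⊆ S)
    (t : List (List Bool)) (htx : x ∈ Icc (ivalF t a b).1 (ivalF t a b).2)
    (hFF : FF a b x = Lgen.ofList (bitsOf t))
    (hnogap : ∀ w : List Bool,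
      x ∉ Ioo (gap (ivalF t a b).1 (ivalF t a b).2 w).1 (gap (ivalF t a b).1 (ivalF t a b).2 w).2) :
    ∃ l : List Bool, Lgen.ofList l ≤ FF a b x ∧ {z : L2 | Lgen.ofList l ≤ z} ⊆ FF a b '' S := by
  set u := (ivalF t a b).1 with hu
  set v := (ivalF t a b).2 with hv
  have huv : u < v := ivalF_lt t a b hab
  have hcant : CantorMem u v x := cantorMem_of_no_gap huv htx hnogap
  have hIooab : Ioo u v ⊆ Ioo a b := ivalF_Ioo_subset t a b hab
  have hcellS : ∀ p : Bool, ∃ w : List Bool, bit w = p ∧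
      Ioo (ivalF (t ++ [w]) a b).1 (ivalF (t ++ [w]) a b).2 ⊆ S := by
    intro p
    obtain ⟨w, hwbit, hwsub⟩ := gap_density huv hcant hε p
    refine ⟨w, hwbit, ?_⟩
    intro y hy
    rw [ivalF_snoc] at hy
    have hy' : y ∈ Icc (gap u v w).1 (gap u v w).2 := Ioo_subset_Icc_self hy
    have := hwsub hy'
    exact hball ⟨this.2, hIooab this.1⟩
  refine ⟨bitsOf t, by rw [hFF], ?_⟩
  intro z hz
  rw [mem_setOf_eq] at hz
  by_cases hzn : z.toFun t.length = none
  · have hzeq : z = Lgen.ofList (bitsOf t) := by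
      apply Lgen.ext'
      intro k
      rcases lt_or_ge k t.length with hk | hk
      · rw [z_some_of_le hz hk, Lgen.ofList_toFun,
          List.getElem?_eq_getElem (by simpa using hk), bitsOf_getElem t k hk]
      · have : z.toFun k = none := by
          by_contra hc
          exact (Lgen.down z hk hc) hzn
        rw [this, Lgen.ofList_toFun, List.getElem?_eq_none (by simpa using hk)]
    exact ⟨x, hxS, by rw [hFF, hzeq]⟩
  · obtain ⟨p, hp⟩ := Option.ne_none_iff_exists'.1 hzn
    obtain ⟨w, hwbit, hwsub⟩ := hcellS p
    have hz' : Lgen.ofList (bitsOf (t ++ [w])) ≤ z := by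
      rw [Lgen.ofList_le_iff]
      intro k hk
      have hk' : k < t.length + 1 := by simpa [bitsOf] using hk
      rcases lt_or_ge k t.length with hkt | hkt
      · rw [z_some_of_le hz hkt]
        congr 1
        rw [bitsOf_getElem _ k (by simp; omega), List.getElem_append_left (by simpa using hkt)]
      · have hkeq : k = t.length := by omega
        subst hkeq
        rw [hp]
        congr 1
        rw [bitsOf_getElem _ t.length (by simp), List.getElem_append_right (le_refl _)]
        simp [hwbit]
    obtain ⟨x', hx', hFx'⟩ := cell_surj hab (t ++ [w]) z hz'
    exact ⟨x', hwsub hx', hFx'⟩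

lemma main_open {a b : ℝ} (hab : a < b) (S : Set ℝ) (hS : S ⊆ Icc a b) {x : ℝ} (hxS : x ∈ S)
    {ε : ℝ} (hε : 0 < ε) (hball : Ioo (x - ε) (x + ε) ∩ Ioo a b ⊆ S) :
    ∃ l : List Bool, Lgen.ofList l ≤ FF a b x ∧ {z : L2 | Lgen.ofList l ≤ z} ⊆ FF a b '' S := by
  by_cases hfin : ∃ n, (FF a b x).toFun n = none
  · set n₀ := Nat.find hfin with hn₀
    have hnone : ∀ k, n₀ ≤ k → (FF a b x).toFun k = none := fun k hk => by
      by_contra hc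
      exact (Lgen.down (FF a b x) hk hc) (Nat.find_spec hfin)
    have hlt : ∀ k, k < n₀ → (FF a b x).toFun k ≠ none := fun k hk => Nat.find_min hfin hk
    rcases Nat.eq_zero_or_pos n₀ with h0 | hpos
    · -- FF x is the root
      have htx : x ∈ Icc (ivalF [] a b).1 (ivalF [] a b).2 := hS hxS
      have hFF : FF a b x = Lgen.ofList (bitsOf []) := by
        apply Lgen.ext'
        intro k
        rw [hnone k (by omega)]
        simp [bitsOf]
      refine main_core hab S hxS hε hball [] htx hFF ?_
      intro w hw
      have hx1 : x ∈ Ioo (ivalF [w] a b).1 (ivalF [w] a b).2 := by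
        rw [ivalF_single]; exact hw
      have h1 := FF_spec hab [w] 0 (by simp) hx1
      rw [hnone 0 (by omega)] at h1
      exact nomatch h1
    · have hp0 : (FF a b x).toFun (n₀ - 1) ≠ none := hlt (n₀ - 1) (by omega)
      obtain ⟨p, hp⟩ := Option.ne_none_iff_exists'.1 hp0
      obtain ⟨t, htl, hxt, -⟩ := FF_some hp
      have htl' : t.length = n₀ := by omega
      have htx : x ∈ Icc (ivalF t a b).1 (ivalF t a b).2 := Ioo_subset_Icc_self hxt
      have hFF : FF a b x = Lgen.ofList (bitsOf t) := by
        apply Lgen.ext'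
        intro k
        rcases lt_or_ge k n₀ with hk | hk
        · rw [FF_spec hab t k (by omega) hxt, Lgen.ofList_toFun,
            List.getElem?_eq_getElem (by simp; omega), bitsOf_getElem t k (by omega),
            getD_eq_getElem' t k [] (by omega)]
        · rw [hnone k hk, Lgen.ofList_toFun, List.getElem?_eq_none (by simp; omega)]
      refine main_core hab S hxS hε hball t htx hFF ?_
      intro w hw
      have hx1 : x ∈ Ioo (ivalF (t ++ [w]) a b).1 (ivalF (t ++ [w]) a b).2 := by
        rw [ivalF_snoc]; exact hw
      have := FF_spec hab (t ++ [w]) n₀ (by simp; omega) hx1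
      rw [hnone n₀ (le_refl _)] at this
      exact nomatch this
  · push_neg at hfin
    obtain ⟨n, hn⟩ : ∃ n : ℕ, (b - a)/3^n < ε := by
      obtain ⟨n, hn⟩ := pow_unbounded_of_one_lt ((b - a)/ε) (by norm_num : (1:ℝ) < 3)
      refine ⟨n, ?_⟩
      rw [div_lt_iff₀ (by positivity)]
      rw [div_lt_iff₀ hε] at hn
      linarith [mul_comm ε ((3:ℝ)^n)]
    obtain ⟨p, hp⟩ := Option.ne_none_iff_exists'.1 (hfin n)
    obtain ⟨t, htl, hxt, -⟩ := FF_some hp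
    refine ⟨bitsOf t, le_FF hab t hxt, ?_⟩
    have hsubS : Ioo (ivalF t a b).1 (ivalF t a b).2 ⊆ S := by
      intro y hy
      have hyab : y ∈ Ioo a b := ivalF_Ioo_subset t a b hab hy
      have hlen : (ivalF t a b).2 - (ivalF t a b).1 ≤ (b - a)/3^(n+1) := by
        have := ivalF_len t a b hab
        rwa [htl] at this
      have hle : (b - a)/3^(n+1) ≤ (b - a)/3^n := by
        apply div_le_div_of_nonneg_left (by linarith) (by positivity)
        apply pow_le_pow_right₀ (by norm_num) (by omega)
      have hxy : |y - x| < ε := by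
        rw [abs_lt]
        simp only [mem_Ioo] at hy hxt
        constructor <;> linarith [hy.1, hy.2, hxt.1, hxt.2]
      refine hball ⟨?_, hyab⟩
      rw [mem_Ioo]
      rw [abs_lt] at hxy
      constructor <;> linarith [hxy.1, hxy.2]
    intro z hz
    rw [mem_setOf_eq] at hz
    obtain ⟨x', hx', hFx'⟩ := cell_surj hab t z hz
    exact ⟨x', hsubS hx', hFx'⟩

end S12
namespace S12

lemma pack {a b : ℝ} (hab : a < b) (D : Set ℝ) (h1 : Ioo a b ⊆ D) (h2 : D ⊆ Icc a b) :
    ∃ f : D → L2, Function.Surjective f ∧ Continuous f ∧ IsOpenMap f ∧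
      ∀ y : D, (y : ℝ) ∉ Ioo a b → f y = Lgen.ofList ([] : List Bool) := by
  refine ⟨fun y => FF a b y.val, ?_, ?_, ?_, ?_⟩
  · -- surjective
    intro z
    obtain ⟨x, hx, hFx⟩ := cell_surj hab [] z
      (by rw [show bitsOf [] = [] from rfl]; exact Lgen.ofList_nil_le z)
    exact ⟨⟨x, h1 hx⟩, hFx⟩
  · -- continuous
    rw [continuous_def]
    intro U hU
    rw [isOpen_iff_mem_nhds]
    intro y hy
    obtain ⟨l, hle, hsub⟩ := exists_up_of_open hU hy
    rcases eq_or_ne l [] with rfl | hl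
    · have : (fun (y : D) => FF a b y.val) ⁻¹' U = univ :=
        eq_univ_of_forall (fun y' => hsub (Lgen.ofList_nil_le _))
      rw [this]
      exact Filter.univ_mem
    · obtain ⟨t, htl, htb, htx⟩ := FF_le hl hle
      have hopen : IsOpen (Subtype.val ⁻¹' (Ioo (ivalF t a b).1 (ivalF t a b).2) : Set D) :=
        isOpen_Ioo.preimage continuous_subtype_val
      apply Filter.mem_of_superset (hopen.mem_nhds htx)
      intro y' hy'
      apply hsub
      rw [mem_setOf_eq, ← htb]
      exact le_FF hab t hy'
  · -- open map
    intro U hU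
    apply isOpen_of_up
    rintro z ⟨y, hyU, rfl⟩
    obtain ⟨ε, hε, hballsub⟩ := Metric.isOpen_iff.1 hU y hyU
    set S : Set ℝ := Subtype.val '' U with hSdef
    have hS : S ⊆ Icc a b := by
      rintro r ⟨y', hy', rfl⟩
      exact h2 y'.2
    have hxS : (y : ℝ) ∈ S := ⟨y, hyU, rfl⟩
    have hball : Ioo ((y : ℝ) - ε) ((y : ℝ) + ε) ∩ Ioo a b ⊆ S := by
      rintro r ⟨hr1, hr2⟩
      have hrD : r ∈ D := h1 hr2
      have hmem : (⟨r, hrD⟩ : D) ∈ Metric.ball y ε := by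
        rw [Metric.mem_ball, Subtype.dist_eq, Real.dist_eq, abs_lt]
        simp only [mem_Ioo] at hr1
        constructor <;> linarith [hr1.1, hr1.2]
      exact ⟨⟨r, hrD⟩, hballsub hmem, rfl⟩
    obtain ⟨l, hle, hsub⟩ := main_open hab S hS hxS hε hball
    refine ⟨l, hle, ?_⟩
    intro z' hz'
    obtain ⟨r, hrS, hFr⟩ := hsub hz'
    obtain ⟨y', hy'U, rfl⟩ := hrS
    exact ⟨y', hy'U, hFr⟩
  · -- boundary goes to the root
    intro y hy
    exact FF_root hy

end S12

/-- For all reals `a < b`, each of the intervals `(a,b)`, `[a,b)` and `[a,b]`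
(as subspaces of `ℝ`) admits a surjective interior map onto `𝐋₂`; moreover the map on `[a,b]`
can be chosen to send both endpoints to the root of `L₂` (the empty sequence). -/
theorem statement12 (a b : ℝ) (hab : a < b) :
    (∃ f : (Set.Ioo a b) → L2, Function.Surjective f ∧ Continuous f ∧ IsOpenMap f) ∧
    (∃ f : (Set.Ico a b) → L2, Function.Surjective f ∧ Continuous f ∧ IsOpenMap f) ∧
    (∃ f : (Set.Icc a b) → L2, Function.Surjective f ∧ Continuous f ∧ IsOpenMap f ∧
      f ⟨a, le_refl a, le_of_lt hab⟩ = Lgen.ofList ([] : List Bool) ∧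
      f ⟨b, le_of_lt hab, le_refl b⟩ = Lgen.ofList ([] : List Bool)) := by
  refine ⟨?_, ?_, ?_⟩
  · obtain ⟨f, hsurj, hcont, hopen, -⟩ :=
      S12.pack hab (Set.Ioo a b) (subset_refl _) Set.Ioo_subset_Icc_self
    exact ⟨f, hsurj, hcont, hopen⟩
  · obtain ⟨f, hsurj, hcont, hopen, -⟩ :=
      S12.pack hab (Set.Ico a b) Set.Ioo_subset_Ico_self Set.Ico_subset_Icc_self
    exact ⟨f, hsurj, hcont, hopen⟩
  · obtain ⟨f, hsurj, hcont, hopen, hroot⟩ :=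
      S12.pack hab (Set.Icc a b) Set.Ioo_subset_Icc_self (subset_refl _)
    refine ⟨f, hsurj, hcont, hopen, ?_, ?_⟩
    · exact hroot _ (by simp)
    · exact hroot _ (by simp)
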